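/- Let $a, b_1, b_2, b_3, b_4$ be integers with $3a + b_1 + b_2 + b_3 + b_4 = 5k-2$ for some integer $k$. Then $a^2 - b_1^2 - b_2^2 - b_3^2 - b_4^2 \le 5k^2 - 4k$. Equality holds if and only if either ($a = 3k-1$ and exactly one $b_i$ equals $1-k$ while the other three equal $-k$), or ($a = 3k-2$ and all $b_i$ equal $1-k$). -/
import Mathlib

private lemma int_le_sq (c : ℤ) : c ≤ c ^ 2 := by
  rcases le_or_gt c 0 with hc | hc
  · nlinarith
  · nlinarith

private lemma aux_lt (M : ℤ) (hM : M ≤ 0 ∨ 3 ≤ M) :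
    4 * M ^ 2 < (3 * M - 2) ^ 2 := by
  rcases hM with hM | hM <;> nlinarith

set_option maxHeartbeats 1000000 in
theorem stmt_4 (a b1 b2 b3 b4 k : ℤ)
    (h : 3 * a + b1 + b2 + b3 + b4 = 5 * k - 2) :
    a ^ 2 - b1 ^ 2 - b2 ^ 2 - b3 ^ 2 - b4 ^ 2 ≤ 5 * k ^ 2 - 4 * k ∧
    (a ^ 2 - b1 ^ 2 - b2 ^ 2 - b3 ^ 2 - b4 ^ 2 = 5 * k ^ 2 - 4 * k ↔
      (a = 3 * k - 1 ∧ ({b1, b2, b3, b4} : Multiset ℤ) = {1 - k, -k, -k, -k}) ∨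
      (a = 3 * k - 2 ∧ b1 = 1 - k ∧ b2 = 1 - k ∧ b3 = 1 - k ∧ b4 = 1 - k)) := by
  have key : a ^ 2 - b1 ^ 2 - b2 ^ 2 - b3 ^ 2 - b4 ^ 2 - (5 * k ^ 2 - 4 * k)
      = (3 * k - a) ^ 2 -
        ((b1 + k) ^ 2 + (b2 + k) ^ 2 + (b3 + k) ^ 2 + (b4 + k) ^ 2) := by
    linear_combination 2 * k * h
  have l1 := int_le_sq (b1 + k)
  have l2 := int_le_sq (b2 + k)
  have l3 := int_le_sq (b3 + k)
  have l4 := int_le_sq (b4 + k)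
  rcases eq_or_ne a (3 * k - 1) with hA | hA
  · subst hA
    constructor
    · linarith
    constructor
    · intro he
      have e1 : (b1 + k) ^ 2 = b1 + k := by linarith
      have e2 : (b2 + k) ^ 2 = b2 + k := by linarith
      have e3 : (b3 + k) ^ 2 = b3 + k := by linarith
      have e4 : (b4 + k) ^ 2 = b4 + k := by linarith
      have d1 : b1 = -k ∨ b1 = 1 - k := by
        rcases mul_eq_zero.mp (show (b1 + k) * ((b1 + k) - 1) = 0 by
          linear_combination e1) with h0 | h0 <;> omega
      have d2 : b2 = -k ∨ b2 = 1 - k := by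
        rcases mul_eq_zero.mp (show (b2 + k) * ((b2 + k) - 1) = 0 by
          linear_combination e2) with h0 | h0 <;> omega
      have d3 : b3 = -k ∨ b3 = 1 - k := by
        rcases mul_eq_zero.mp (show (b3 + k) * ((b3 + k) - 1) = 0 by
          linear_combination e3) with h0 | h0 <;> omega
      have d4 : b4 = -k ∨ b4 = 1 - k := by
        rcases mul_eq_zero.mp (show (b4 + k) * ((b4 + k) - 1) = 0 by
          linear_combination e4) with h0 | h0 <;> omega
      rcases d1 with hb1 | hb1 <;> rcases d2 with hb2 | hb2 <;>
        rcases d3 with hb3 | hb3 <;> rcases d4 with hb4 | hb4 <;>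
        subst hb1 <;> subst hb2 <;> subst hb3 <;> subst hb4 <;>
        first
          | (exfalso; omega)
          | exact Or.inl ⟨by ring, by simp [Multiset.cons_swap, ← Multiset.cons_zero]⟩
    · rintro (⟨-, hm⟩ | ⟨ha', -⟩)
      · have hsq := congrArg (fun s : Multiset ℤ => (s.map (fun x => x ^ 2)).sum) hm
        simp only [Multiset.insert_eq_cons, Multiset.map_cons, Multiset.map_singleton,
          Multiset.sum_cons, Multiset.sum_singleton] at hsq
        linear_combination -hsq
      · omega
  · rcases eq_or_ne a (3 * k - 2) with hB | hB
    · subst hB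
      constructor
      · linarith
      constructor
      · intro he
        have e1 : (b1 + k) ^ 2 = b1 + k := by linarith
        have e2 : (b2 + k) ^ 2 = b2 + k := by linarith
        have e3 : (b3 + k) ^ 2 = b3 + k := by linarith
        have e4 : (b4 + k) ^ 2 = b4 + k := by linarith
        have d1 : b1 = -k ∨ b1 = 1 - k := by
          rcases mul_eq_zero.mp (show (b1 + k) * ((b1 + k) - 1) = 0 by
            linear_combination e1) with h0 | h0 <;> omega
        have d2 : b2 = -k ∨ b2 = 1 - k := by
          rcases mul_eq_zero.mp (show (b2 + k) * ((b2 + k) - 1) = 0 by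
            linear_combination e2) with h0 | h0 <;> omega
        have d3 : b3 = -k ∨ b3 = 1 - k := by
          rcases mul_eq_zero.mp (show (b3 + k) * ((b3 + k) - 1) = 0 by
            linear_combination e3) with h0 | h0 <;> omega
        have d4 : b4 = -k ∨ b4 = 1 - k := by
          rcases mul_eq_zero.mp (show (b4 + k) * ((b4 + k) - 1) = 0 by
            linear_combination e4) with h0 | h0 <;> omega
        exact Or.inr ⟨by ring, by omega, by omega, by omega, by omega⟩
      · rintro (⟨ha', -⟩ | ⟨-, hb1, hb2, hb3, hb4⟩)
        · omega
        · subst hb1; subst hb2; subst hb3; subst hb4; ring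
    · have hM : 3 * k - a ≤ 0 ∨ 3 ≤ 3 * k - a := by omega
      have hstrict : (3 * k - a) ^ 2 <
          (b1 + k) ^ 2 + (b2 + k) ^ 2 + (b3 + k) ^ 2 + (b4 + k) ^ 2 := by
        have id1 : 4 * ((b1 + k) ^ 2 + (b2 + k) ^ 2 + (b3 + k) ^ 2 + (b4 + k) ^ 2)
            - (b1 + b2 + b3 + b4 + 4 * k) ^ 2
            = (b1 - b2) ^ 2 + (b1 - b3) ^ 2 + (b1 - b4) ^ 2 + (b2 - b3) ^ 2
              + (b2 - b4) ^ 2 + (b3 - b4) ^ 2 := by ring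
        have cauchy : (b1 + b2 + b3 + b4 + 4 * k) ^ 2
            ≤ 4 * ((b1 + k) ^ 2 + (b2 + k) ^ 2 + (b3 + k) ^ 2 + (b4 + k) ^ 2) := by
          linarith [id1, sq_nonneg (b1 - b2), sq_nonneg (b1 - b3), sq_nonneg (b1 - b4),
            sq_nonneg (b2 - b3), sq_nonneg (b2 - b4), sq_nonneg (b3 - b4)]
        have hsum : b1 + b2 + b3 + b4 + 4 * k = 3 * (3 * k - a) - 2 := by omega
        rw [hsum] at cauchy
        have hlt := aux_lt (3 * k - a) hM
        linarith
      refine ⟨by linarith, ?_, ?_⟩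
      · intro he; exfalso; linarith
      · rintro (⟨ha', -⟩ | ⟨ha', -⟩) <;> omega
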